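/- Let ρ ∈ ℕ and let 𝒮 be a set of nonempty finite subsets of ℕ such that for every u ∈ 𝒮 the number of sets w ∈ 𝒮 with u ∩ w ≠ ∅ is at most 1 + ρ. Then for every finite set v ⊆ ℕ, the number of sets u ∈ 𝒮 with u ⊆ v is at most (1 + ρ) · |v|. -/

import Mathlib

/-- Finite-intersection weights: if every `u ∈ 𝒮` meets at most `1 + ρ` members
of `𝒮`, then at most `(1 + ρ)·|v|` members of `𝒮` are contained in any finite
set `v` (i.e. `t*_σ = 1`). -/
theorem stmt17 (ρ : ℕ) (𝒮 : Set (Finset ℕ))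
    (hne : ∀ u ∈ 𝒮, u.Nonempty)
    (hint : ∀ u ∈ 𝒮, {w | w ∈ 𝒮 ∧ (u ∩ w).Nonempty}.encard ≤ (1 + ρ : ℕ)) :
    ∀ v : Finset ℕ, {u | u ∈ 𝒮 ∧ u ⊆ v}.encard ≤ ((1 + ρ) * v.card : ℕ) := by
  have fiber : ∀ a : ℕ, {u | u ∈ 𝒮 ∧ a ∈ u}.encard ≤ (1 + ρ : ℕ) := by
    intro a
    rcases Set.eq_empty_or_nonempty {u | u ∈ 𝒮 ∧ a ∈ u} with h | ⟨u0, hu0⟩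
    · simp [h]
    · refine le_trans (Set.encard_le_encard ?_) (hint u0 hu0.1)
      rintro w ⟨hw, haw⟩
      exact ⟨hw, a, Finset.mem_inter.2 ⟨hu0.2, haw⟩⟩
  intro v
  induction v using Finset.induction_on with
  | empty =>
    have : {u | u ∈ 𝒮 ∧ u ⊆ (∅ : Finset ℕ)} = ∅ := by
      ext u
      simp only [Set.mem_setOf_eq, Set.mem_empty_iff_false, iff_false, not_and]
      intro hu hsub
      exact absurd (Finset.subset_empty.1 hsub) (hne u hu).ne_empty
    simp only [this, Set.encard_empty]
    exact zero_le
  | @insert a v ha hav =>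
    have hsub : {u | u ∈ 𝒮 ∧ u ⊆ insert a v} ⊆
        {u | u ∈ 𝒮 ∧ a ∈ u} ∪ {u | u ∈ 𝒮 ∧ u ⊆ v} := by
      rintro u ⟨hu, husub⟩
      by_cases h : a ∈ u
      · exact Or.inl ⟨hu, h⟩
      · refine Or.inr ⟨hu, fun x hx => ?_⟩
        rcases Finset.mem_insert.1 (husub hx) with rfl | hxv
        · exact absurd hx h
        · exact hxv
    calc {u | u ∈ 𝒮 ∧ u ⊆ insert a v}.encard
        ≤ ({u | u ∈ 𝒮 ∧ a ∈ u} ∪ {u | u ∈ 𝒮 ∧ u ⊆ v}).encard :=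
          Set.encard_le_encard hsub
      _ ≤ {u | u ∈ 𝒮 ∧ a ∈ u}.encard + {u | u ∈ 𝒮 ∧ u ⊆ v}.encard :=
          Set.encard_union_le _ _
      _ ≤ (1 + ρ : ℕ) + ((1 + ρ) * v.card : ℕ) := add_le_add (fiber a) hav
      _ = ((1 + ρ) * (insert a v).card : ℕ) := by
          rw [Finset.card_insert_of_notMem ha]
          push_cast
          ring
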